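/- Fix t ≠ 0 and r > 0. Let s(r) ≥ 0 be the unique nonnegative real with cosh(s(r)) = cosh r · cosh t, and let β(r) = arcsin( sinh r / sinh(s(r)) ). Then sinh(s(r))² · (dβ/dr)² + (ds/dr)² = 1, where dβ/dr and ds/dr denote the derivatives of the functions r ↦ β(r) and r ↦ s(r) at r. -/

import Mathlib

/-- The hypotenuse `s(t, r)`: the unique nonnegative real with
`cosh (polarS t r) = cosh r * cosh t` (see `polarS_nonneg` and `cosh_polarS`). -/
noncomputable def polarS (t r : ℝ) : ℝ :=
  Real.arsinh (Real.sqrt ((Real.cosh r * Real.cosh t) ^ 2 - 1))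

theorem polarS_nonneg (t r : ℝ) : 0 ≤ polarS t r :=
  Real.arsinh_nonneg_iff.mpr (Real.sqrt_nonneg _)

theorem cosh_polarS (t r : ℝ) : Real.cosh (polarS t r) = Real.cosh r * Real.cosh t := by
  have h1 : (1 : ℝ) ≤ Real.cosh r * Real.cosh t := by
    nlinarith [Real.one_le_cosh r, Real.one_le_cosh t]
  have h2 : (0 : ℝ) ≤ (Real.cosh r * Real.cosh t) ^ 2 - 1 := by nlinarith
  rw [polarS, Real.cosh_arsinh, Real.sq_sqrt h2]
  rw [show (1 : ℝ) + ((Real.cosh r * Real.cosh t) ^ 2 - 1)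
      = (Real.cosh r * Real.cosh t) ^ 2 by ring]
  exact Real.sqrt_sq (by linarith)

/-- The angle `β(t, r) = arcsin (sinh r / sinh (s(t, r)))`. -/
noncomputable def polarBeta (t r : ℝ) : ℝ :=
  Real.arcsin (Real.sinh r / Real.sinh (polarS t r))

/-- Fix `t ≠ 0` and `r > 0`. With `s(r') = polarS t r'` and
`β(r') = arcsin (sinh r' / sinh (s(r')))`, one has
`sinh (s r)² * (dβ/dr)² + (ds/dr)² = 1`. -/
theorem fermi_polar_r_component (t r : ℝ) (ht : t ≠ 0) (hr : 0 < r) :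
    Real.sinh (polarS t r) ^ 2 * (deriv (fun r' : ℝ => polarBeta t r') r) ^ 2
        + (deriv (fun r' : ℝ => polarS t r') r) ^ 2
      = 1 := by
  set c := Real.cosh t with hc_def
  have hc : 1 < c := Real.one_lt_cosh.mpr ht
  set g : ℝ → ℝ := fun r' => (Real.cosh r' * c) ^ 2 - 1 with hg_def
  have hgpos : ∀ x, 0 < g x := fun x => by
    have h0 := Real.one_le_cosh x
    have h1 : 1 < Real.cosh x * c := by nlinarith
    simp only [hg_def]; nlinarith
  set cr := Real.cosh r with hcr_def
  set sr := Real.sinh r with hsr_def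
  have hcr1 : 1 ≤ cr := Real.one_le_cosh r
  have hsr0 : 0 < sr := Real.sinh_pos_iff.mpr hr
  have hcr2 : cr ^ 2 = sr ^ 2 + 1 := by
    rw [hcr_def, hsr_def, Real.cosh_sq]
  set sg := Real.sqrt (g r) with hsg_def
  have hsgpos : 0 < sg := Real.sqrt_pos.mpr (hgpos r)
  have hsgsq : sg ^ 2 = cr ^ 2 * c ^ 2 - 1 := by
    rw [hsg_def, Real.sq_sqrt (hgpos r).le]; ring
  have hsinhS : ∀ x, Real.sinh (polarS t x) = Real.sqrt (g x) := fun x => by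
    rw [polarS, Real.sinh_arsinh]
  -- derivative of g
  have hg' : HasDerivAt g (2 * cr * sr * c ^ 2) r := by
    have h1 : HasDerivAt (fun x => Real.cosh x * c) (sr * c) r :=
      (Real.hasDerivAt_cosh r).mul_const c
    have h2 := (h1.pow 2).sub_const 1
    refine h2.congr_deriv ?_
    push_cast; ring
  -- derivative of sqrt ∘ g
  have hsq : HasDerivAt (fun x => Real.sqrt (g x)) (2 * cr * sr * c ^ 2 / (2 * sg)) r :=
    hg'.sqrt (ne_of_gt (hgpos r))
  -- derivative of polarS
  have hsqrt1 : Real.sqrt (1 + sg ^ 2) = cr * c := by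
    rw [hsgsq, show (1 : ℝ) + (cr ^ 2 * c ^ 2 - 1) = (cr * c) ^ 2 by ring]
    exact Real.sqrt_sq (by positivity)
  have hS : HasDerivAt (fun r' : ℝ => polarS t r') (sr * c / sg) r := by
    have h := (Real.hasDerivAt_arsinh (Real.sqrt (g r))).comp r hsq
    have heq : (Real.arsinh ∘ fun x => Real.sqrt (g x)) = fun r' : ℝ => polarS t r' := rfl
    rw [heq] at h
    refine h.congr_deriv ?_
    rw [← hsg_def, hsqrt1]
    field_simp
  -- derivative of u := fun x => sinh x / sqrt (g x)
  set u : ℝ → ℝ := fun x => Real.sinh x / Real.sqrt (g x) with hu_def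
  have hur : u r = sr / sg := rfl
  have hsrlt : sr < sg := by
    have h : sr ^ 2 < sg ^ 2 := by nlinarith [mul_pos (pow_pos (lt_of_lt_of_le one_pos hcr1) 2) (sub_pos.mpr hc)]
    exact lt_of_pow_lt_pow_left₀ 2 hsgpos.le h
  have hur_nonneg : 0 ≤ u r := by rw [hur]; positivity
  have hur_lt : u r < 1 := by
    rw [hur, div_lt_one hsgpos]; exact hsrlt
  have hu' : HasDerivAt u (cr * (c ^ 2 - 1) / sg ^ 3) r := by
    have h := (Real.hasDerivAt_sinh r).div hsq (ne_of_gt hsgpos)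
    refine h.congr_deriv ?_
    rw [← hsg_def, ← hsr_def, ← hcr_def]
    field_simp
    linear_combination hsgsq + c^2 * hcr2
  -- derivative of polarBeta
  set A := Real.sqrt (1 - u r ^ 2) with hA_def
  have hu2 : 0 < 1 - u r ^ 2 := by nlinarith
  have hApos : 0 < A := Real.sqrt_pos.mpr hu2
  have hA2 : A ^ 2 = 1 - u r ^ 2 := Real.sq_sqrt hu2.le
  have hB : HasDerivAt (fun r' : ℝ => polarBeta t r')
      (1 / A * (cr * (c ^ 2 - 1) / sg ^ 3)) r := by
    have harc := Real.hasDerivAt_arcsin (x := u r) (by linarith) (ne_of_lt hur_lt)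
    have h := harc.comp r hu'
    have heq : (Real.arcsin ∘ u) = fun r' : ℝ => polarBeta t r' := by
      funext x
      simp only [Function.comp, polarBeta, hsinhS x, hu_def]
    rwa [heq] at h
  -- assemble
  rw [hB.deriv, hS.deriv, hsinhS r, ← hsg_def]
  have hA2' : A ^ 2 * sg ^ 2 = sg ^ 2 - sr ^ 2 := by
    rw [hA2, hur]; field_simp
  field_simp
  linear_combination (c^2*sr^2 - sg^2) * hA2' + (c^2*sr^2 + sr^2 - (cr^2*c^2-1) - sg^2) * hsgsq
    + ((1-c^2) - c^2*cr^2*(c^2-1) - c^2*(cr^2-sr^2-1)) * hcr2
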